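/- Let q be a prime power, n ≥ 1, r a divisor of q^n − 1, u ∈ F_q, and χ a multiplicative character of F_{q^n} of order d, extended by χ(0) = 0 (also for the trivial character). Set A = Σ_{ξ ∈ F_{q^n}} χ(ξ) ψ̃(u ξ^r), where ψ̃ is the lift to F_{q^n} of the canonical additive character of F_q, i.e., ψ̃(ξ) = ψ₀(Tr(ξ)). Then: (1) if d = 1 and u = 0, A = q^n − 1; (2) if d = 1 and u ≠ 0, |A| ≤ (r − 1) q^{n/2} + 1; (3) if d ≠ 1 and u = 0, A = 0; (4) if d ≠ 1 and u ≠ 0, |A| ≤ r q^{n/2}. -/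

import Mathlib

/-- The canonical additive character of a finite field `K` of characteristic `p`:
`ψ₀(x) = exp(2πi · Tr₀(x)/p)` where `Tr₀` is the absolute trace down to the prime field. -/
noncomputable def canonAddChar (p : ℕ) (K : Type*) [Field K] [Fintype K] [CharP K p]
    [Algebra (ZMod p) K] (x : K) : ℂ :=
  Complex.exp (2 * Real.pi * Complex.I * ((Algebra.trace (ZMod p) K x).val : ℂ) / (p : ℂ))


noncomputable def zmodChar' (p : ℕ) [NeZero p] : AddChar (ZMod p) ℂ where
  toFun k := Complex.exp (2 * Real.pi * Complex.I * (k.val : ℂ) / (p : ℂ))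
  map_zero_eq_one' := by simp
  map_add_eq_mul' a b := by
    have hp : (p : ℂ) ≠ 0 := Nat.cast_ne_zero.mpr (NeZero.ne p)
    have h : (a.val + b.val : ℕ) = (a + b).val + p * ((a.val + b.val) / p) := by
      rw [ZMod.val_add]
      exact (Nat.mod_add_div _ _).symm
    rw [← Complex.exp_add]
    rw [← add_div, ← mul_add, ← Nat.cast_add, h]
    push_cast
    rw [mul_add, add_div, mul_div_assoc (2 * Real.pi * Complex.I)]
    rw [mul_div_assoc, mul_comm (p:ℂ), mul_div_assoc, div_self hp, mul_one]
    rw [Complex.exp_add, mul_comm ((2:ℂ) * Real.pi * Complex.I) ((((a.val + b.val) / p : ℕ)):ℂ),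
      Complex.exp_nat_mul_two_pi_mul_I, mul_one]

lemma zmodChar'_apply_ne_one (p : ℕ) [Fact p.Prime] {k : ZMod p} (hk : k ≠ 0) :
    zmodChar' p k ≠ 1 := by
  intro h1
  have hp : (p : ℂ) ≠ 0 := Nat.cast_ne_zero.mpr (Nat.Prime.ne_zero Fact.out)
  have h2pi : (2 : ℂ) * Real.pi * Complex.I ≠ 0 := by
    simp [Real.pi_ne_zero, Complex.I_ne_zero]
  rw [show (zmodChar' p) k = Complex.exp (2 * Real.pi * Complex.I * (k.val : ℂ) / p) from rfl,
    Complex.exp_eq_one_iff] at h1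
  obtain ⟨m, hm⟩ := h1
  have h2 : ((k.val : ℤ) : ℂ) = ((m * p : ℤ) : ℂ) := by
    push_cast
    set c : ℂ := (k.val : ℂ) with hc
    field_simp at hm
    have key : (2 * (Real.pi:ℂ) * Complex.I) * c
        = (2 * (Real.pi:ℂ) * Complex.I) * ((m:ℂ) * p) := by linear_combination (2 * (Real.pi:ℂ) * Complex.I) * hm
    exact mul_left_cancel₀ h2pi key
  have h3 : (k.val : ℤ) = m * p := Int.cast_injective h2
  have hdvd : (p:ℕ) ∣ k.val := by
    have : (p:ℤ) ∣ (k.val : ℤ) := Dvd.intro m (by linarith)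
    exact_mod_cast this
  have hlt : k.val < p := ZMod.val_lt k
  have h0 : k.val = 0 := Nat.eq_zero_of_dvd_of_lt hdvd hlt
  exact hk (by rwa [← ZMod.val_eq_zero])

open Finset

section Dual

variable {E : Type*} [Field E] [Fintype E] [DecidableEq E]

noncomputable instance : Fintype (MulChar E ℂ) := Fintype.ofFinite _

instance heru : HasEnoughRootsOfUnity ℂ (Monoid.exponent Eˣ) := by
  have : NeZero ((Monoid.exponent Eˣ : ℕ) : ℂ) :=
    ⟨Nat.cast_ne_zero.mpr Monoid.exponent_ne_zero_of_finite⟩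
  infer_instance

lemma card_mulChar : (Fintype.card (MulChar E ℂ) : ℂ) = (Fintype.card E : ℂ) - 1 := by
  have h := MulChar.card_eq_card_units_of_hasEnoughRootsOfUnity E ℂ
  rw [Nat.card_eq_fintype_card, Nat.card_eq_fintype_card] at h
  classical
  rw [h, Fintype.card_units]
  have : 0 < Fintype.card E := Fintype.card_pos
  push_cast [Nat.cast_sub this.nat_succ_le]
  ring

lemma sum_mulChar_dual_eq_zero {y : E} (hy : y ≠ 1) :
    ∑ lam : MulChar E ℂ, lam y = 0 := by
  by_cases hu : IsUnit y
  · obtain ⟨μ, hμ⟩ := MulChar.exists_apply_ne_one_of_hasEnoughRootsOfUnity E ℂ hy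
    have key : μ y * ∑ lam : MulChar E ℂ, lam y = ∑ lam : MulChar E ℂ, lam y := by
      rw [Finset.mul_sum]
      have : ∀ lam : MulChar E ℂ, μ y * lam y = (μ * lam) y := by
        intro lam; rw [MulChar.coeToFun_mul, Pi.mul_apply]
      simp_rw [this]
      exact Fintype.sum_bijective (fun lam => μ * lam) (Group.mulLeft_bijective μ) _ _
        (fun lam => rfl)
    have : (μ y - 1) * ∑ lam : MulChar E ℂ, lam y = 0 := by ring_nf; linear_combination key
    rcases mul_eq_zero.mp this with h | h
    · exact absurd (by linear_combination h) hμ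
    · exact h
  · simp [MulChar.map_nonunit _ hu]

lemma sum_mulChar_dual_one : ∑ lam : MulChar E ℂ, lam (1 : E) = (Fintype.card E : ℂ) - 1 := by
  rw [← card_mulChar]
  simp [Finset.card_univ]

/-- Gauss sum inversion. -/
lemma gauss_inversion (ψ : AddChar E ℂ) {t : E} (ht : t ≠ 0) :
    ∑ lam : MulChar E ℂ, lam⁻¹ t * gaussSum lam ψ = ((Fintype.card E : ℂ) - 1) * ψ t := by
  have htu : IsUnit t := ht.isUnit
  simp_rw [gaussSum, Finset.mul_sum]
  rw [Finset.sum_comm]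
  have step : ∀ x : E, ∑ lam : MulChar E ℂ, lam⁻¹ t * (lam x * ψ x)
      = (∑ lam : MulChar E ℂ, lam (t⁻¹ * x)) * ψ x := by
    intro x
    rw [Finset.sum_mul]
    refine Finset.sum_congr rfl fun lam _ => ?_
    rw [MulChar.inv_apply' lam t, ← mul_assoc, ← map_mul lam]
  simp_rw [step]
  rw [Finset.sum_eq_single t]
  · rw [inv_mul_cancel₀ ht, sum_mulChar_dual_one]
  · intro x _ hx
    rw [sum_mulChar_dual_eq_zero, zero_mul]
    intro h
    apply hx
    rw [inv_mul_eq_one₀ (by exact fun h0 => ht h0)] at h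
    exact h.symm
  · simp

end Dual

section Main

variable {E : Type*} [Field E] [Fintype E] [DecidableEq E]

lemma sum_mulChar_one' : ∑ ξ : E, (1 : MulChar E ℂ) ξ = (Fintype.card E : ℂ) - 1 := by
  have : ∀ ξ : E, (1 : MulChar E ℂ) ξ = if ξ ≠ 0 then 1 else 0 := by
    intro ξ
    by_cases h : ξ = 0
    · simp [h, MulChar.map_nonunit _ (by simp : ¬ IsUnit (0:E))]
    · rw [MulChar.one_apply (isUnit_iff_ne_zero.mpr h), if_pos h]
  rw [Finset.sum_congr rfl fun ξ _ => this ξ, Finset.sum_ite, Finset.sum_const,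
    Finset.sum_const]
  simp only [nsmul_eq_mul, smul_eq_mul, mul_one, mul_zero, add_zero]
  rw [Finset.filter_ne', Finset.card_erase_of_mem (Finset.mem_univ 0), Finset.card_univ]
  have h2 : 0 < Fintype.card E := Fintype.card_pos
  push_cast [Nat.cast_sub h2.nat_succ_le]
  ring

lemma sum_mulChar' (χ : MulChar E ℂ) :
    ∑ ξ : E, χ ξ = if χ = 1 then (Fintype.card E : ℂ) - 1 else 0 := by
  split_ifs with h
  · rw [h]; exact sum_mulChar_one'
  · exact MulChar.sum_eq_zero_of_ne_one h

/-- The key identity: the hybrid sum equals a sum of Gauss sums over characters whose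
`r`-th power is `χ`. -/
lemma key_identity (ψ : AddChar E ℂ) (χ : MulChar E ℂ) {r : ℕ} (hr : 0 < r) {v : E}
    (hv : v ≠ 0) :
    ∑ ξ : E, χ ξ * ψ (v * ξ ^ r) =
      ∑ lam ∈ Finset.univ.filter (fun lam : MulChar E ℂ => lam ^ r = χ),
        lam⁻¹ v * gaussSum lam ψ := by
  classical
  set N : ℂ := (Fintype.card E : ℂ) with hN
  have hN1 : N - 1 ≠ 0 := by
    have : 2 ≤ Fintype.card E := Fintype.one_lt_card
    intro h
    rw [sub_eq_zero] at h
    have : (Fintype.card E : ℂ) ≠ 1 := by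
      exact_mod_cast (by omega : Fintype.card E ≠ 1)
    exact this h
  apply mul_left_cancel₀ hN1
  have lhs : (N - 1) * ∑ ξ : E, χ ξ * ψ (v * ξ ^ r)
      = ∑ ξ : E, χ ξ * ((N - 1) * ψ (v * ξ ^ r)) := by
    rw [Finset.mul_sum]; exact Finset.sum_congr rfl fun ξ _ => by ring
  rw [lhs]
  have zero_term : χ (0 : E) * ((N - 1) * ψ (v * 0 ^ r)) = 0 := by
    rw [MulChar.map_nonunit _ (by simp : ¬ IsUnit (0:E)), zero_mul]
  have expand : ∀ ξ : E, ξ ≠ 0 → χ ξ * ((N - 1) * ψ (v * ξ ^ r))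
      = ∑ lam : MulChar E ℂ, χ ξ * (lam⁻¹ (v * ξ ^ r) * gaussSum lam ψ) := by
    intro ξ hξ
    rw [← gauss_inversion ψ (t := v * ξ ^ r) (by
      exact mul_ne_zero hv (pow_ne_zero r hξ)), Finset.mul_sum]
  calc ∑ ξ : E, χ ξ * ((N - 1) * ψ (v * ξ ^ r))
      = ∑ ξ ∈ Finset.univ.erase 0, χ ξ * ((N - 1) * ψ (v * ξ ^ r)) :=
        (Finset.sum_erase (f := fun ξ : E => χ ξ * ((N - 1) * ψ (v * ξ ^ r)))
          Finset.univ zero_term).symm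
    _ = ∑ ξ ∈ Finset.univ.erase 0, ∑ lam : MulChar E ℂ,
          χ ξ * (lam⁻¹ (v * ξ ^ r) * gaussSum lam ψ) :=
        Finset.sum_congr rfl fun ξ hξ => expand ξ (Finset.mem_erase.mp hξ).1
    _ = ∑ lam : MulChar E ℂ, ∑ ξ ∈ Finset.univ.erase 0,
          χ ξ * (lam⁻¹ (v * ξ ^ r) * gaussSum lam ψ) := Finset.sum_comm
    _ = ∑ lam : MulChar E ℂ, (lam⁻¹ v * gaussSum lam ψ) *
          ∑ ξ ∈ Finset.univ.erase 0, (χ * lam⁻¹ ^ r) ξ := by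
        refine Finset.sum_congr rfl fun lam _ => ?_
        rw [Finset.mul_sum]
        refine Finset.sum_congr rfl fun ξ hξ => ?_
        have hξ0 : ξ ≠ 0 := (Finset.mem_erase.mp hξ).1
        rw [map_mul lam⁻¹, map_pow lam⁻¹]
        rw [MulChar.coeToFun_mul, Pi.mul_apply, MulChar.pow_apply' lam⁻¹ hr.ne' ξ]
        ring
    _ = ∑ lam : MulChar E ℂ, (lam⁻¹ v * gaussSum lam ψ) *
          ∑ ξ : E, (χ * lam⁻¹ ^ r) ξ := by
        refine Finset.sum_congr rfl fun lam _ => ?_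
        rw [Finset.sum_erase (f := fun ξ : E => (χ * lam⁻¹ ^ r) ξ) Finset.univ
          (MulChar.map_nonunit _ (by simp : ¬ IsUnit (0:E)))]
    _ = ∑ lam : MulChar E ℂ,
          if lam ^ r = χ then (N - 1) * (lam⁻¹ v * gaussSum lam ψ) else 0 := by
        refine Finset.sum_congr rfl fun lam _ => ?_
        rw [sum_mulChar']
        have hiff : (χ * lam⁻¹ ^ r = 1) ↔ lam ^ r = χ := by
          rw [inv_pow, mul_inv_eq_one]
          exact eq_comm
        by_cases h : lam ^ r = χ
        · rw [if_pos (hiff.mpr h), if_pos h]; ring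
        · rw [if_neg (fun hh => h (hiff.mp hh)), if_neg h]
          exact mul_zero _
    _ = (N - 1) * ∑ lam ∈ Finset.univ.filter (fun lam : MulChar E ℂ => lam ^ r = χ),
          lam⁻¹ v * gaussSum lam ψ := by
        rw [Finset.mul_sum, Finset.sum_filter]

end Main

section Bounds

variable {E : Type*} [Field E] [Fintype E] [DecidableEq E]

lemma conj_gaussSum (hchar : 0 < ringChar E) (χ : MulChar E ℂ) (ψ : AddChar E ℂ) :
    (starRingEnd ℂ) (gaussSum χ ψ) = gaussSum χ⁻¹ ψ⁻¹ := by
  rw [gaussSum, gaussSum, map_sum]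
  refine Finset.sum_congr rfl fun x _ => ?_
  rw [map_mul, show (starRingEnd ℂ) (χ x) = star (χ x) from rfl, MulChar.star_apply' χ x,
    AddChar.starComp_apply hchar]

lemma abs_gaussSum_of_ne_one (hchar : 0 < ringChar E) {χ : MulChar E ℂ} (hχ : χ ≠ 1)
    {ψ : AddChar E ℂ} (hψ : ψ.IsPrimitive) :
    ‖gaussSum χ ψ‖ = Real.sqrt (Fintype.card E) := by
  have h := gaussSum_mul_gaussSum_eq_card hχ hψ
  rw [← conj_gaussSum hchar] at h
  rw [Complex.mul_conj] at h
  have h2 : Complex.normSq (gaussSum χ ψ) = (Fintype.card E : ℝ) := by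
    exact_mod_cast h
  rw [Complex.norm_def, h2]

lemma abs_mulChar_inv (χ : MulChar E ℂ) {v : E} (hv : v ≠ 0) :
    ‖χ⁻¹ v‖ = 1 := by
  have h1 : χ⁻¹ v * χ v = 1 := by
    rw [← Pi.mul_apply, ← MulChar.coeToFun_mul, inv_mul_cancel,
      MulChar.one_apply (isUnit_iff_ne_zero.mpr hv)]
  have h2 : ‖χ⁻¹ v‖ * ‖χ v‖ = 1 := by
    rw [← norm_mul, h1, norm_one]
  have h3 : ‖χ⁻¹ v‖ = ‖χ v‖ := by
    rw [← MulChar.star_apply' χ v, show star (χ v) = (starRingEnd ℂ) (χ v) from rfl,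
      Complex.norm_conj]
  nlinarith [norm_nonneg (χ⁻¹ v), norm_nonneg (χ v)]

lemma gaussSum_one_eq {ψ : AddChar E ℂ} (hψ : ψ ≠ 1) :
    gaussSum (1 : MulChar E ℂ) ψ = -1 := by
  have h0 : (1 : MulChar E ℂ) (0 : E) * ψ 0 = 0 := by
    rw [MulChar.map_nonunit _ (by simp : ¬ IsUnit (0:E)), zero_mul]
  calc gaussSum (1 : MulChar E ℂ) ψ
      = ∑ x ∈ Finset.univ.erase 0, (1 : MulChar E ℂ) x * ψ x :=
        (Finset.sum_erase (f := fun x : E => (1 : MulChar E ℂ) x * ψ x) Finset.univ h0).symm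
    _ = ∑ x ∈ Finset.univ.erase 0, ψ x := Finset.sum_congr rfl fun x hx => by
        rw [MulChar.one_apply (isUnit_iff_ne_zero.mpr (Finset.mem_erase.mp hx).1), one_mul]
    _ = (∑ x : E, ψ x) - ψ 0 := Finset.sum_erase_eq_sub (Finset.mem_univ 0)
    _ = -1 := by
        rw [AddChar.sum_eq_zero_iff_ne_zero.mpr (by rwa [← AddChar.one_eq_zero]),
          AddChar.map_zero_eq_one]
        ring

lemma card_filter_pow_le (χ : MulChar E ℂ) {r : ℕ} (hr : 0 < r) :
    (Finset.univ.filter (fun lam : MulChar E ℂ => lam ^ r = χ)).card ≤ r := by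
  obtain ⟨e⟩ := MulChar.mulEquiv_units E ℂ
  have hinj : Set.InjOn (fun lam : MulChar E ℂ => ((e lam : Eˣ) : E))
      ↑(Finset.univ.filter (fun lam : MulChar E ℂ => lam ^ r = χ)) := by
    intro x _ y _ hxy
    exact e.injective (Units.ext hxy)
  have hmaps : ∀ lam ∈ Finset.univ.filter (fun lam : MulChar E ℂ => lam ^ r = χ),
      ((e lam : Eˣ) : E) ∈ (Polynomial.nthRoots r ((e χ : Eˣ) : E)).toFinset := by
    intro lam hlam
    rw [Multiset.mem_toFinset, Polynomial.mem_nthRoots hr]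
    rw [Finset.mem_filter] at hlam
    rw [← Units.val_pow_eq_pow_val, ← map_pow, hlam.2]
  calc (Finset.univ.filter (fun lam : MulChar E ℂ => lam ^ r = χ)).card
      ≤ (Polynomial.nthRoots r ((e χ : Eˣ) : E)).toFinset.card :=
        Finset.card_le_card_of_injOn _ hmaps hinj
    _ ≤ Multiset.card (Polynomial.nthRoots r ((e χ : Eˣ) : E)) :=
        Multiset.toFinset_card_le _
    _ ≤ r := Polynomial.card_nthRoots r _

end Bounds

section Final

variable {E : Type*} [Field E] [Fintype E] [DecidableEq E]

lemma hybrid_bound (hchar : 0 < ringChar E) {ψ : AddChar E ℂ} (hψ : ψ ≠ 1) (χ : MulChar E ℂ)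
    {r : ℕ} (hr : 0 < r) {v : E} (hv : v ≠ 0) :
    (χ ≠ 1 → ‖∑ ξ : E, χ ξ * ψ (v * ξ ^ r)‖
        ≤ (r : ℝ) * Real.sqrt (Fintype.card E)) ∧
    (χ = 1 → ‖∑ ξ : E, χ ξ * ψ (v * ξ ^ r)‖
        ≤ ((r : ℝ) - 1) * Real.sqrt (Fintype.card E) + 1) := by
  classical
  have hψp : ψ.IsPrimitive := AddChar.IsPrimitive.of_ne_one hψ
  set S := Finset.univ.filter (fun lam : MulChar E ℂ => lam ^ r = χ) with hS
  have hkey := key_identity ψ χ hr hv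
  have habs : ‖∑ ξ : E, χ ξ * ψ (v * ξ ^ r)‖
      ≤ ∑ lam ∈ S, ‖gaussSum lam ψ‖ := by
    rw [hkey]
    refine le_trans (norm_sum_le _ _) (le_of_eq ?_)
    refine Finset.sum_congr rfl fun lam _ => ?_
    rw [norm_mul, abs_mulChar_inv lam hv, one_mul]
  have hcard : S.card ≤ r := card_filter_pow_le χ hr
  have hsqrt : (0:ℝ) ≤ Real.sqrt (Fintype.card E) := Real.sqrt_nonneg _
  constructor
  · intro hχ
    refine habs.trans ?_
    have hne : ∀ lam ∈ S, ‖gaussSum lam ψ‖ = Real.sqrt (Fintype.card E) := by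
      intro lam hlam
      rw [hS, Finset.mem_filter] at hlam
      have hlam1 : lam ≠ 1 := by
        rintro rfl
        exact hχ (by rw [← hlam.2, one_pow])
      exact abs_gaussSum_of_ne_one hchar hlam1 hψp
    rw [Finset.sum_congr rfl hne, Finset.sum_const, nsmul_eq_mul]
    exact mul_le_mul_of_nonneg_right (by exact_mod_cast hcard) hsqrt
  · intro hχ
    refine habs.trans ?_
    have h1S : (1 : MulChar E ℂ) ∈ S := by
      rw [hS, Finset.mem_filter]
      exact ⟨Finset.mem_univ _, by rw [one_pow, hχ]⟩
    rw [← Finset.sum_erase_add S _ h1S, gaussSum_one_eq hψ]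
    have hbound : ∑ lam ∈ S.erase 1, ‖gaussSum lam ψ‖
        ≤ ((r : ℝ) - 1) * Real.sqrt (Fintype.card E) := by
      have heq : ∀ lam ∈ S.erase 1, ‖gaussSum lam ψ‖ = Real.sqrt (Fintype.card E) :=
        fun lam hlam =>
          abs_gaussSum_of_ne_one hchar (Finset.mem_erase.mp hlam).1 hψp
      rw [Finset.sum_congr rfl heq, Finset.sum_const, nsmul_eq_mul]
      refine mul_le_mul_of_nonneg_right ?_ hsqrt
      have : (S.erase 1).card = S.card - 1 := Finset.card_erase_of_mem h1S
      have h1 : 1 ≤ S.card := Finset.card_pos.mpr ⟨1, h1S⟩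
      rw [this]
      push_cast [Nat.cast_sub h1]
      have : (S.card : ℝ) ≤ r := by exact_mod_cast hcard
      linarith
    have : ‖(-1 : ℂ)‖ = 1 := by simp
    rw [this]
    linarith

end Final

/-- Hybrid character-sum bounds: with `χ` a multiplicative character of
`F_{q^n}` of order `d` (with `χ(0) = 0`), `r ∣ q^n - 1`, `u ∈ F_q`, and
`A = Σ_{ξ ∈ F_{q^n}} χ(ξ) ψ̃(u ξ^r)` where `ψ̃ = ψ₀ ∘ Tr` is the lift of the canonical
additive character `ψ₀` of `F_q`: (1) if `d = 1, u = 0` then `A = q^n - 1`;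
(2) if `d = 1, u ≠ 0` then `|A| ≤ (r-1)q^{n/2} + 1`; (3) if `d ≠ 1, u = 0` then `A = 0`;
(4) if `d ≠ 1, u ≠ 0` then `|A| ≤ r q^{n/2}`. -/
theorem hybrid_character_sum_bounds (p a q n : ℕ) [Fact p.Prime] (ha : 0 < a) (hq : q = p ^ a)
    (hn : 1 ≤ n)
    (F E : Type*) [Field F] [Fintype F] [CharP F p] [Algebra (ZMod p) F]
    [Field E] [Fintype E] [Algebra F E]
    (hF : Fintype.card F = q) (hE : Fintype.card E = q ^ n)
    (r : ℕ) (hr : r ∣ q ^ n - 1) (u : F)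
    (χ : MulChar E ℂ) (d : ℕ) (hd : orderOf χ = d)
    (A : ℂ)
    (hA : A = ∑ ξ : E, χ ξ * canonAddChar p F (Algebra.trace F E (algebraMap F E u * ξ ^ r))) :
    (d = 1 → u = 0 → A = (q : ℂ) ^ n - 1) ∧
    (d = 1 → u ≠ 0 → ‖A‖ ≤ ((r : ℝ) - 1) * Real.sqrt (q ^ n) + 1) ∧
    (d ≠ 1 → u = 0 → A = 0) ∧
    (d ≠ 1 → u ≠ 0 → ‖A‖ ≤ (r : ℝ) * Real.sqrt (q ^ n)) := by
  classical
  haveI : CharP E p := charP_of_injective_algebraMap (algebraMap F E).injective p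
  letI : Algebra (ZMod p) E := ZMod.algebra E p
  haveI : IsScalarTower (ZMod p) F E := IsScalarTower.of_algebraMap_eq' (RingHom.ext_zmod _ _)
  haveI : Module.Finite (ZMod p) F := Module.Finite.of_finite
  haveI : Module.Finite F E := Module.Finite.of_finite
  haveI : Module.Finite (ZMod p) E := Module.Finite.of_finite
  set ψE : AddChar E ℂ :=
    (zmodChar' p).compAddMonoidHom (Algebra.trace (ZMod p) E).toAddMonoidHom with hψEdef
  have hcomp : ∀ y : E, canonAddChar p F (Algebra.trace F E y) = ψE y := by
    intro y
    show Complex.exp (2 * Real.pi * Complex.I *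
        (((Algebra.trace (ZMod p) F (Algebra.trace F E y)).val : ℂ)) / p)
      = zmodChar' p (Algebra.trace (ZMod p) E y)
    rw [Algebra.trace_trace (S := F)]
    rfl
  have hψE : ψE ≠ 1 := by
    haveI : Algebra.IsAlgebraic (ZMod p) E := inferInstance
    haveI : Algebra.IsSeparable (ZMod p) E := inferInstance
    obtain ⟨x, hx⟩ := Algebra.trace_surjective (ZMod p) E 1
    intro h
    have hval : ψE x = 1 := by rw [h]; rfl
    have hxne : Algebra.trace (ZMod p) E x ≠ 0 := by rw [hx]; exact one_ne_zero
    exact zmodChar'_apply_ne_one p hxne hval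
  have hchar : 0 < ringChar E := by
    rw [ringChar.eq E p]; exact (Fact.out : p.Prime).pos
  have hq2 : 2 ≤ q := by
    subst hq
    exact Nat.one_lt_pow ha.ne' (Fact.out : p.Prime).one_lt
  have hqn : 2 ≤ q ^ n := le_trans hq2 (Nat.le_self_pow (by omega) q)
  have hr0 : 0 < r := by
    rcases Nat.eq_zero_or_pos r with h | h
    · subst h; rw [zero_dvd_iff] at hr; omega
    · exact h
  have hAr : A = ∑ ξ : E, χ ξ * ψE (algebraMap F E u * ξ ^ r) := by
    rw [hA]; exact Finset.sum_congr rfl fun ξ _ => by rw [hcomp]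
  have hord : (χ = 1) ↔ d = 1 := by rw [← hd, orderOf_eq_one_iff]
  have hsq : ((Fintype.card E : ℕ) : ℝ) = (q : ℝ) ^ n := by rw [hE]; push_cast; ring
  refine ⟨?_, ?_, ?_, ?_⟩
  · intro hd1 hu
    rw [hAr, hu]
    simp only [map_zero, zero_mul, AddChar.map_zero_eq_one, mul_one]
    rw [sum_mulChar', if_pos (hord.mpr hd1), hE]
    push_cast
    ring
  · intro hd1 hu
    have hv : algebraMap F E u ≠ 0 := (map_ne_zero (algebraMap F E)).mpr hu
    have hb := (hybrid_bound hchar hψE χ hr0 hv).2 (hord.mpr hd1)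
    rw [hsq] at hb
    rw [hAr]
    exact hb
  · intro hd1 hu
    rw [hAr, hu]
    simp only [map_zero, zero_mul, AddChar.map_zero_eq_one, mul_one]
    rw [sum_mulChar', if_neg (fun h => hd1 (hord.mp h))]
  · intro hd1 hu
    have hv : algebraMap F E u ≠ 0 := (map_ne_zero (algebraMap F E)).mpr hu
    have hb := (hybrid_bound hchar hψE χ hr0 hv).1 (fun h => hd1 (hord.mp h))
    rw [hsq] at hb
    rw [hAr]
    exact hb
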